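/- Assume G_r contains the edge (1, r - 1) (i.e., j_q = r - 1 where j_q = max{j : (1,j) ∈ E(G_r)}), the maximal support index is r (some edge has endpoint r, with b, B the min and max first coordinates of such edges), and the sparsity index is ≥ 2. Then for all n ≥ 2r + 1, the complement of the induced subgraph G_n \ N[n] has exactly two connected components, namely the induced subgraphs on V_1 = {1, ..., b-1} and V_2 = {n-r+B+1, ..., n-1}; consequently the 0-th reduced homology of the independence complex IN(G_n \ N[n]) over a field k is isomorphic to k. -/
import Mathlib


/-- `(k,l)` lies in the triangle `Δ((i,j), n-r)` for some edge `(i,j) ∈ E` of `G_r`,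
i.e. `0 ≤ k - i ≤ l - j ≤ n - r` (written additively). -/
def triRel (E : Set (ℕ × ℕ)) (r n k l : ℕ) : Prop :=
  ∃ q ∈ E, q.1 ≤ k ∧ k + q.2 ≤ l + q.1 ∧ l + r ≤ n + q.2

/-- The graph `G_n` of the invariant chain determined by the edge set `E` of `G_r`:
`(k,l)` with `k < l` is an edge of `G_n` iff `(k,l) ∈ Δ((i,j), n-r)` for some `(i,j) ∈ E`. -/
def chainGraph (E : Set (ℕ × ℕ)) (r n : ℕ) : SimpleGraph ℕ :=
  SimpleGraph.fromRel (triRel E r n)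

/-- `E` is a set of edges `(i,j)` of a graph `G_r` on `{1,…,r}` with `i < j`. -/
def goodEdges (E : Set (ℕ × ℕ)) (r : ℕ) : Prop :=
  ∀ q ∈ E, 1 ≤ q.1 ∧ q.1 < q.2 ∧ q.2 ≤ r

/-- The independence complex of a graph `G`: the set of finite independent sets. -/
def indepComplex {V : Type*} (G : SimpleGraph V) : Set (Finset V) :=
  {s | ∀ u ∈ s, ∀ v ∈ s, ¬ G.Adj u v}

/-- The augmentation map `∂₀ : C₀(Δ; k) → k` of the reduced simplicial chain complex,
sending each vertex of `Δ` to `1`. -/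
noncomputable def augMap (k : Type) [Field k] (V : Type) (Δ : Set (Finset V)) :
    ({v : V // ({v} : Finset V) ∈ Δ} →₀ k) →ₗ[k] k :=
  Finsupp.linearCombination k (fun _ => (1 : k))

/-- The boundaries of the 1-faces of `Δ`: the image of `∂₁ : C₁(Δ; k) → C₀(Δ; k)`
is spanned by the differences `u - v` over edges `{u,v}` of `Δ`. -/
def edgeBoundaries (k : Type) [Field k] (V : Type) [DecidableEq V] (Δ : Set (Finset V)) :
    Set ({v : V // ({v} : Finset V) ∈ Δ} →₀ k) :=
  {f | ∃ u v : {v : V // ({v} : Finset V) ∈ Δ}, ({u.1, v.1} : Finset V) ∈ Δ ∧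
    f = Finsupp.single u 1 - Finsupp.single v 1}

/-- The 0-th reduced simplicial homology of `Δ` over the field `k`, presented as
`ker ∂₀ / im ∂₁`, realized as the kernel of the map induced by the augmentation `∂₀`
on `C₀/im ∂₁`. -/
noncomputable abbrev redH0 (k : Type) [Field k] (V : Type) [DecidableEq V]
    (Δ : Set (Finset V)) : Type :=
  LinearMap.ker ((Submodule.span k (edgeBoundaries k V Δ)).liftQ (augMap k V Δ) (by
    rw [Submodule.span_le]
    rintro f ⟨u, v, -, rfl⟩
    simp [SetLike.mem_coe, LinearMap.mem_ker, map_sub, augMap,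
      Finsupp.linearCombination_single]))

/- ### Auxiliary graph lemmas -/

lemma triRel_lt {E : Set (ℕ × ℕ)} {r n k l : ℕ} (hsp : ∀ q ∈ E, q.1 + 2 ≤ q.2)
    (h : triRel E r n k l) : k + 2 ≤ l := by
  obtain ⟨q, hq, h1, h2, h3⟩ := h
  have := hsp q hq
  omega

lemma adj_iff_of_lt {E : Set (ℕ × ℕ)} {r n u v : ℕ} (hsp : ∀ q ∈ E, q.1 + 2 ≤ q.2)
    (h : u < v) : (chainGraph E r n).Adj u v ↔ triRel E r n u v := by
  constructor
  · rintro ⟨hne, h1 | h1⟩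
    · exact h1
    · exact absurd (triRel_lt hsp h1) (by omega)
  · intro h1; exact ⟨by omega, Or.inl h1⟩

lemma not_adj_succ {E : Set (ℕ × ℕ)} {r n : ℕ} (hsp : ∀ q ∈ E, q.1 + 2 ≤ q.2) (m : ℕ) :
    ¬ (chainGraph E r n).Adj m (m + 1) := by
  rw [adj_iff_of_lt hsp (by omega)]
  intro h
  have := triRel_lt hsp h
  omega

lemma adj_n_iff {E : Set (ℕ × ℕ)} {r n b B : ℕ}
    (hE : goodEdges E r) (hsp : ∀ q ∈ E, q.1 + 2 ≤ q.2)
    (hb : (b, r) ∈ E) (hB : (B, r) ∈ E)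
    (hbmin : ∀ i, (i, r) ∈ E → b ≤ i) (hBmax : ∀ i, (i, r) ∈ E → i ≤ B)
    (hn : 2 * r + 1 ≤ n) {m : ℕ} (h2 : m < n) :
    (chainGraph E r n).Adj n m ↔ b ≤ m ∧ m + r ≤ n + B := by
  have hBr := hsp _ hB
  have hbB := hbmin _ hB
  rw [(chainGraph E r n).adj_comm, adj_iff_of_lt hsp h2]
  constructor
  · rintro ⟨⟨i, j⟩, hq, hq1, hq2, hq3⟩
    have h1 := hE _ hq
    have : j = r := by simp at h1; omega
    subst this
    have := hbmin _ hq
    have := hBmax _ hq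
    simp at hq1 hq2 hq3 ⊢
    omega
  · rintro ⟨hm1, hm2⟩
    by_cases hc : m + r ≤ n + b
    · exact ⟨(b, r), hb, hm1, hc, le_refl _⟩
    · refine ⟨(B, r), hB, by omega, hm2, le_refl _⟩

/- ### Auxiliary homological lemmas -/

/-- abstract: if `A`, `φb` are functionals on a module with points `e`, `f` such that
every `x` decomposes as `φb x • e + (A x - φb x) • f`, with the indicated values of the
functionals at `e` and `f`, then `ker A ≃ k`. -/
noncomputable def kerEquivOfDecomp (k : Type) [Field k] {M : Type*} [AddCommGroup M]
    [Module k M] (A φb : M →ₗ[k] k) (e f : M)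
    (hdec : ∀ x : M, x = φb x • e + (A x - φb x) • f)
    (he : φb e = 1) (hf : φb f = 0) (hAe : A e = 1) (hAf : A f = 1) :
    LinearMap.ker A ≃ₗ[k] k := by
  refine LinearEquiv.ofLinear (φb.comp (LinearMap.ker A).subtype)
    (LinearMap.codRestrict _ (LinearMap.toSpanSingleton k M (e - f)) ?_) ?_ ?_
  · intro a
    simp [LinearMap.mem_ker, LinearMap.toSpanSingleton_apply, smul_sub, map_sub, hAe, hAf]
  · apply LinearMap.ext_ring
    simp [LinearMap.toSpanSingleton_apply, map_sub, he, hf]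
  · ext x
    have hx : A x.1 = 0 := x.2
    have := hdec x.1
    simp only [LinearMap.coe_comp, Function.comp_apply, LinearMap.codRestrict_apply,
      LinearMap.toSpanSingleton_apply, LinearMap.id_coe, id_eq, Submodule.coe_subtype]
    rw [smul_sub]
    conv_rhs => rw [this]
    rw [hx]
    module

lemma redH0_iso (k : Type) [Field k] (V : Type) [DecidableEq V] (Δ : Set (Finset V))
    (φ : ({v : V // ({v} : Finset V) ∈ Δ} →₀ k) →ₗ[k] k)
    (hφ : Submodule.span k (edgeBoundaries k V Δ) ≤ LinearMap.ker φ)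
    (u₀ v₀ : {v : V // ({v} : Finset V) ∈ Δ})
    (hu₀ : φ (Finsupp.single u₀ 1) = 1) (hv₀ : φ (Finsupp.single v₀ 1) = 0)
    (hrep : ∀ v, Finsupp.single v (1:k) - Finsupp.single u₀ 1 ∈
        Submodule.span k (edgeBoundaries k V Δ) ∨
      Finsupp.single v (1:k) - Finsupp.single v₀ 1 ∈
        Submodule.span k (edgeBoundaries k V Δ)) :
    Nonempty (redH0 k V Δ ≃ₗ[k] k) := by
  set N := Submodule.span k (edgeBoundaries k V Δ) with hN
  refine ⟨kerEquivOfDecomp k _ (N.liftQ φ hφ)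
    (Submodule.Quotient.mk (Finsupp.single u₀ 1)) (Submodule.Quotient.mk (Finsupp.single v₀ 1))
    ?_ ?_ ?_ ?_ ?_⟩
  · -- decomposition
    set A := N.liftQ (augMap k V Δ) _ with hA
    have key : (LinearMap.id : (_ ⧸ N) →ₗ[k] (_ ⧸ N)) =
        ((N.liftQ φ hφ).smulRight (Submodule.Quotient.mk (Finsupp.single u₀ 1))) +
        ((A - N.liftQ φ hφ).smulRight (Submodule.Quotient.mk (Finsupp.single v₀ 1))) := by
      apply Submodule.linearMap_qext
      refine Finsupp.lhom_ext' fun v => LinearMap.ext_ring ?_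
      simp only [LinearMap.coe_comp, Function.comp_apply, Finsupp.lsingle_apply,
        Submodule.mkQ_apply, LinearMap.id_coe, id_eq, LinearMap.add_apply,
        LinearMap.smulRight_apply, LinearMap.sub_apply, Submodule.liftQ_apply, hA]
      have hAv : augMap k V Δ (Finsupp.single v (1:k)) = 1 := by
        simp [augMap, Finsupp.linearCombination_single]
      rw [hAv]
      rcases hrep v with h | h
      · have hq : (Submodule.Quotient.mk (Finsupp.single v (1:k)) :
            (_ ⧸ N)) = Submodule.Quotient.mk (Finsupp.single u₀ 1) :=
          (Submodule.Quotient.eq N).mpr h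
        have hφv : φ (Finsupp.single v (1:k)) = 1 := by
          have := hφ h
          rw [LinearMap.mem_ker, map_sub, hu₀] at this
          rwa [sub_eq_zero] at this
        rw [hφv, hq]
        simp
      · have hq : (Submodule.Quotient.mk (Finsupp.single v (1:k)) :
            (_ ⧸ N)) = Submodule.Quotient.mk (Finsupp.single v₀ 1) :=
          (Submodule.Quotient.eq N).mpr h
        have hφv : φ (Finsupp.single v (1:k)) = 0 := by
          have := hφ h
          rw [LinearMap.mem_ker, map_sub, hv₀] at this
          rwa [sub_eq_zero] at this
        rw [hφv, hq]
        simp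
    intro x
    conv_lhs => rw [← LinearMap.id_apply (R := k) x, key]
    simp
  · simp [Submodule.liftQ_apply, hu₀]
  · simp [Submodule.liftQ_apply, hv₀]
  · simp [Submodule.liftQ_apply, augMap, Finsupp.linearCombination_single]
  · simp [Submodule.liftQ_apply, augMap, Finsupp.linearCombination_single]

/-- Assume `(1, r-1) ∈ E(G_r)` and `j_q = r - 1`, the maximal support index is `r`
(with `b`, `B` the min and max first coordinates of edges ending at `r`), and the
sparsity index is at least 2. Then for `n ≥ 2r+1`, the complement of the induced
subgraph `G_n \ N[n]` has exactly two connected components, namely those on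
`V₁ = {1,…,b-1}` and `V₂ = {n-r+B+1,…,n-1}`; consequently the 0-th reduced homology
of the independence complex `IN(G_n \ N[n])` over a field `k` is isomorphic to `k`. -/
theorem two_components_and_redH0 (k : Type) [Field k] (E : Set (ℕ × ℕ)) (r n b B : ℕ)
    (hE : goodEdges E r) (h1 : (1, r - 1) ∈ E) (hjq : ∀ j, (1, j) ∈ E → j ≤ r - 1)
    (hb : (b, r) ∈ E) (hB : (B, r) ∈ E)
    (hbmin : ∀ i, (i, r) ∈ E → b ≤ i) (hBmax : ∀ i, (i, r) ∈ E → i ≤ B)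
    (hsp : ∀ q ∈ E, q.1 + 2 ≤ q.2) (hn : 2 * r + 1 ≤ n) :
    ∀ S : Set ℕ, S = Set.Icc 1 n \ insert n ((chainGraph E r n).neighborSet n) →
      ((∃ u : S, (u : ℕ) < b) ∧ (∃ u : S, n - r + B + 1 ≤ (u : ℕ)) ∧
      (∀ u v : S, (((chainGraph E r n).induce S)ᶜ).Reachable u v ↔
        (((u : ℕ) < b ∧ (v : ℕ) < b) ∨
          (n - r + B + 1 ≤ (u : ℕ) ∧ n - r + B + 1 ≤ (v : ℕ)))) ∧
      Nonempty (redH0 k S (indepComplex ((chainGraph E r n).induce S)) ≃ₗ[k] k)) := by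
  intro S hS
  have hb1 : 1 ≤ b := (hE _ hb).1
  have hbr : b + 2 ≤ r := hsp _ hb
  have hBr : B + 2 ≤ r := hsp _ hB
  have hbB : b ≤ B := hbmin _ hB
  have hb2 : 2 ≤ b := by
    rcases Nat.lt_or_ge b 2 with hc | hc
    · have : b = 1 := by omega
      subst this
      have := hjq r hb
      omega
    · exact hc
  -- membership characterization
  have hmem : ∀ m : ℕ, m ∈ S ↔ (1 ≤ m ∧ m < b) ∨ (n - r + B + 1 ≤ m ∧ m < n) := by
    intro m
    rw [hS]
    simp only [Set.mem_diff, Set.mem_Icc, Set.mem_insert_iff, SimpleGraph.mem_neighborSet]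
    constructor
    · rintro ⟨⟨hm1, hm2⟩, hm3⟩
      push_neg at hm3
      obtain ⟨hm3, hm4⟩ := hm3
      have hlt : m < n := by omega
      rw [adj_n_iff hE hsp hb hB hbmin hBmax hn hlt] at hm4
      omega
    · rintro (⟨hm1, hm2⟩ | ⟨hm1, hm2⟩) <;>
      · refine ⟨⟨by omega, by omega⟩, ?_⟩
        rintro (hc | hc)
        · omega
        · rw [adj_n_iff hE hsp hb hB hbmin hBmax hn (by omega)] at hc
          omega
  have h1S : (1 : ℕ) ∈ S := (hmem 1).2 (Or.inl ⟨le_refl _, by omega⟩)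
  have hnS : (n - 1 : ℕ) ∈ S := (hmem _).2 (Or.inr ⟨by omega, by omega⟩)
  -- cross adjacency
  have hcross : ∀ u v : ℕ, 1 ≤ u → u < b → n - r + B + 1 ≤ v → v < n →
      (chainGraph E r n).Adj u v := by
    intro u v hu1 hub hvl hvn
    rw [adj_iff_of_lt hsp (by omega)]
    refine ⟨(1, r - 1), h1, ?_, ?_, ?_⟩
    · show 1 ≤ u; omega
    · show u + (r - 1) ≤ v + 1; omega
    · show v + r ≤ n + (r - 1); omega
  -- complement adjacency characterization
  have hcadj : ∀ x y : ↥S, (((chainGraph E r n).induce S)ᶜ).Adj x y ↔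
      ((x : ℕ) ≠ (y : ℕ) ∧ ¬ (chainGraph E r n).Adj x y) := by
    intro x y
    rw [SimpleGraph.compl_adj]
    simp [SimpleGraph.comap_adj, Subtype.ext_iff, ne_eq]
  have hstep : ∀ (m : ℕ) (hm : m ∈ S) (hm1 : m + 1 ∈ S),
      (((chainGraph E r n).induce S)ᶜ).Adj ⟨m, hm⟩ ⟨m + 1, hm1⟩ := by
    intro m hm hm1
    exact (hcadj _ _).2 ⟨by simp, not_adj_succ hsp m⟩
  have hchain : ∀ (d m : ℕ), (∀ t, m ≤ t → t ≤ m + d → t ∈ S) →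
      ∀ (hm : m ∈ S) (hmd : m + d ∈ S),
      (((chainGraph E r n).induce S)ᶜ).Reachable ⟨m, hm⟩ ⟨m + d, hmd⟩ := by
    intro d
    induction d with
    | zero => intro m _ hm hmd; exact SimpleGraph.Reachable.refl _
    | succ d ih =>
      intro m h hm hmd
      have hmd' : m + d ∈ S := h _ (by omega) (by omega)
      exact (ih m (fun t ht ht' => h t ht (by omega)) hm hmd').trans
        (hstep (m + d) hmd' hmd).reachable
  have hside : ∀ x y : ↥S, (((chainGraph E r n).induce S)ᶜ).Adj x y →
      ((x : ℕ) < b ↔ (y : ℕ) < b) := by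
    intro x y hxy
    rw [hcadj] at hxy
    obtain ⟨hne, hnadj⟩ := hxy
    have hx := (hmem _).1 x.2
    have hy := (hmem _).1 y.2
    constructor
    · intro h
      by_contra h'
      have hy1 : n - r + B + 1 ≤ (y : ℕ) := by omega
      have hy2 : (y : ℕ) < n := by omega
      exact hnadj (hcross x y (by omega) h hy1 hy2)
    · intro h
      by_contra h'
      have hx1 : n - r + B + 1 ≤ (x : ℕ) := by omega
      have hx2 : (x : ℕ) < n := by omega
      exact hnadj ((hcross y x (by omega) h hx1 hx2).symm)
  have hwalk : ∀ x y : ↥S, (((chainGraph E r n).induce S)ᶜ).Walk x y →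
      ((x : ℕ) < b ↔ (y : ℕ) < b) := by
    intro x y w
    induction w with
    | nil => exact Iff.rfl
    | cons h p ih => exact (hside _ _ h).trans ih
  have hlowR : ∀ x y : ↥S, (x : ℕ) ≤ (y : ℕ) → (y : ℕ) < b →
      (((chainGraph E r n).induce S)ᶜ).Reachable x y := by
    rintro ⟨x, hx⟩ ⟨y, hy⟩ hxy hyb
    simp only [Subtype.coe_mk] at hxy hyb
    have hx1 : 1 ≤ x := by have := (hmem x).1 hx; omega
    obtain ⟨d, rfl⟩ := Nat.exists_eq_add_of_le hxy
    exact hchain d x (fun t ht ht' => (hmem t).2 (Or.inl ⟨by omega, by omega⟩)) hx hy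
  have hhighR : ∀ x y : ↥S, (x : ℕ) ≤ (y : ℕ) → n - r + B + 1 ≤ (x : ℕ) →
      (((chainGraph E r n).induce S)ᶜ).Reachable x y := by
    rintro ⟨x, hx⟩ ⟨y, hy⟩ hxy hxh
    simp only [Subtype.coe_mk] at hxy hxh
    have hyn : y < n := by have := (hmem y).1 hy; omega
    obtain ⟨d, rfl⟩ := Nat.exists_eq_add_of_le hxy
    exact hchain d x (fun t ht ht' => (hmem t).2 (Or.inr ⟨by omega, by omega⟩)) hx hy
  refine ⟨⟨⟨1, h1S⟩, by show (1:ℕ) < b; omega⟩,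
    ⟨⟨n - 1, hnS⟩, by show n - r + B + 1 ≤ n - 1; omega⟩, ?_, ?_⟩
  · -- reachability
    intro u v
    constructor
    · intro h
      obtain ⟨w⟩ := h
      have hiff := hwalk u v w
      have hu := (hmem _).1 u.2
      have hv := (hmem _).1 v.2
      rcases hu with ⟨hu1, hu2⟩ | ⟨hu1, hu2⟩
      · exact Or.inl ⟨hu2, hiff.mp hu2⟩
      · have hub : ¬ (u : ℕ) < b := by omega
        have hvb : ¬ (v : ℕ) < b := fun hh => hub (hiff.mpr hh)
        rcases hv with ⟨hv1, hv2⟩ | ⟨hv1, hv2⟩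
        · omega
        · exact Or.inr ⟨hu1, hv1⟩
    · rintro (⟨hu, hv⟩ | ⟨hu, hv⟩)
      · rcases le_total (u : ℕ) (v : ℕ) with h | h
        · exact hlowR u v h hv
        · exact (hlowR v u h hu).symm
      · rcases le_total (u : ℕ) (v : ℕ) with h | h
        · exact hhighR u v h hu
        · exact (hhighR v u h hv).symm
  · -- homology
    have hsing : ∀ x : ↥S, ({x} : Finset ↥S) ∈
        indepComplex ((chainGraph E r n).induce S) := by
      intro x
      simp only [indepComplex, Set.mem_setOf_eq, Finset.mem_singleton]
      rintro u rfl w rfl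
      exact fun h => h.ne rfl
    have hpair : ∀ x y : ↥S, ¬ (chainGraph E r n).Adj x y →
        ({x, y} : Finset ↥S) ∈ indepComplex ((chainGraph E r n).induce S) := by
      intro x y hxy
      simp only [indepComplex, Set.mem_setOf_eq, Finset.mem_insert, Finset.mem_singleton]
      rintro u (rfl | rfl) w (rfl | rfl)
      · exact fun h => h.ne rfl
      · exact fun h => hxy h
      · exact fun h => hxy h.symm
      · exact fun h => h.ne rfl
    set Δ := indepComplex ((chainGraph E r n).induce S) with hΔ
    set N := Submodule.span k (edgeBoundaries k (↥S) Δ) with hNdef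
    have hstepN : ∀ (m : ℕ) (hm : m ∈ S) (hm1 : m + 1 ∈ S),
        Finsupp.single (⟨⟨m, hm⟩, hsing _⟩ : {v : ↥S // ({v} : Finset ↥S) ∈ Δ}) (1:k) -
          Finsupp.single ⟨⟨m + 1, hm1⟩, hsing _⟩ 1 ∈ N := by
      intro m hm hm1
      exact Submodule.subset_span ⟨_, _, hpair _ _ (not_adj_succ hsp m), rfl⟩
    have hchainN : ∀ (d m : ℕ), (∀ t, m ≤ t → t ≤ m + d → t ∈ S) →
        ∀ (hm : m ∈ S) (hmd : m + d ∈ S),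
        Finsupp.single (⟨⟨m, hm⟩, hsing _⟩ : {v : ↥S // ({v} : Finset ↥S) ∈ Δ}) (1:k) -
          Finsupp.single ⟨⟨m + d, hmd⟩, hsing _⟩ 1 ∈ N := by
      intro d
      induction d with
      | zero =>
        intro m _ hm hmd
        have he : (⟨⟨m + 0, hmd⟩, hsing _⟩ : {v : ↥S // ({v} : Finset ↥S) ∈ Δ}) =
            ⟨⟨m, hm⟩, hsing _⟩ := rfl
        rw [he, sub_self]
        exact N.zero_mem
      | succ d ih =>
        intro m h hm hmd
        have hmd' : m + d ∈ S := h _ (by omega) (by omega)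
        have ha := ih m (fun t ht ht' => h t ht (by omega)) hm hmd'
        have hbb := hstepN (m + d) hmd' hmd
        have := N.add_mem ha hbb
        rwa [sub_add_sub_cancel] at this
    have hlowN : ∀ (x : ℕ) (hx : x ∈ S), x < b →
        Finsupp.single (⟨⟨x, hx⟩, hsing _⟩ : {v : ↥S // ({v} : Finset ↥S) ∈ Δ}) (1:k) -
          Finsupp.single ⟨⟨1, h1S⟩, hsing _⟩ 1 ∈ N := by
      intro x hx hxb
      have hx1 : 1 ≤ x := by have := (hmem x).1 hx; omega
      obtain ⟨d, rfl⟩ := Nat.exists_eq_add_of_le hx1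
      have := N.neg_mem (hchainN d 1
        (fun t ht ht' => (hmem t).2 (Or.inl ⟨by omega, by omega⟩)) h1S hx)
      rwa [neg_sub] at this
    have hhighN : ∀ (x : ℕ) (hx : x ∈ S), n - r + B + 1 ≤ x →
        Finsupp.single (⟨⟨x, hx⟩, hsing _⟩ : {v : ↥S // ({v} : Finset ↥S) ∈ Δ}) (1:k) -
          Finsupp.single ⟨⟨n - 1, hnS⟩, hsing _⟩ 1 ∈ N := by
      intro x hx hxh
      have hxn : x ≤ n - 1 := by have := (hmem x).1 hx; omega
      obtain ⟨d, hd⟩ := Nat.exists_eq_add_of_le hxn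
      have hg : (⟨⟨n - 1, hnS⟩, hsing _⟩ : {v : ↥S // ({v} : Finset ↥S) ∈ Δ}) =
          ⟨⟨x + d, hd ▸ hnS⟩, hsing _⟩ := by
        apply Subtype.ext; apply Subtype.ext; exact hd
      rw [hg]
      exact hchainN d x (fun t ht ht' => (hmem t).2 (Or.inr ⟨by omega, by omega⟩)) hx
        (hd ▸ hnS)
    have hrep : ∀ v : {v : ↥S // ({v} : Finset ↥S) ∈ Δ},
        Finsupp.single v (1:k) - Finsupp.single ⟨⟨1, h1S⟩, hsing _⟩ 1 ∈ N ∨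
        Finsupp.single v (1:k) - Finsupp.single ⟨⟨n - 1, hnS⟩, hsing _⟩ 1 ∈ N := by
      rintro ⟨⟨x, hx⟩, hxs⟩
      rcases (hmem x).1 hx with ⟨hx1, hx2⟩ | ⟨hx1, hx2⟩
      · exact Or.inl (hlowN x hx hx2)
      · exact Or.inr (hhighN x hx hx1)
    -- the indicator functional of V₁
    set φ : ({v : ↥S // ({v} : Finset ↥S) ∈ Δ} →₀ k) →ₗ[k] k :=
      Finsupp.linearCombination k
        (fun v : {v : ↥S // ({v} : Finset ↥S) ∈ Δ} => if ((v.1 : ℕ)) < b then (1:k) else 0)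
      with hφdef
    have hφ : N ≤ LinearMap.ker φ := by
      rw [hNdef, Submodule.span_le]
      rintro f ⟨u, v, hpr, rfl⟩
      simp only [SetLike.mem_coe, LinearMap.mem_ker, map_sub, hφdef,
        Finsupp.linearCombination_single, one_smul]
      by_cases he : u = v
      · subst he; simp
      · have hne : (u.1 : ℕ) ≠ (v.1 : ℕ) := by
          intro e
          exact he (Subtype.ext (Subtype.ext e))
        have hpr' : ∀ a ∈ ({u.1, v.1} : Finset ↥S), ∀ c ∈ ({u.1, v.1} : Finset ↥S),
            ¬ ((chainGraph E r n).induce S).Adj a c := hpr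
        have hnadj : ¬ (chainGraph E r n).Adj u.1 v.1 :=
          hpr' u.1 (by simp) v.1 (by simp)
        have hiff := hside u.1 v.1 ((hcadj _ _).2 ⟨hne, hnadj⟩)
        by_cases hp : (u.1 : ℕ) < b
        · rw [if_pos hp, if_pos (hiff.mp hp), sub_self]
        · rw [if_neg hp, if_neg (fun hq => hp (hiff.mpr hq)), sub_self]
    have hu₀ : φ (Finsupp.single (⟨⟨1, h1S⟩, hsing _⟩ :
        {v : ↥S // ({v} : Finset ↥S) ∈ Δ}) 1) = 1 := by
      rw [hφdef]
      simp only [Finsupp.linearCombination_single, one_smul]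
      exact if_pos (by show (1:ℕ) < b; omega)
    have hv₀ : φ (Finsupp.single (⟨⟨n - 1, hnS⟩, hsing _⟩ :
        {v : ↥S // ({v} : Finset ↥S) ∈ Δ}) 1) = 0 := by
      rw [hφdef]
      simp only [Finsupp.linearCombination_single, one_smul]
      exact if_neg (by show ¬ (n - 1 : ℕ) < b; omega)
    exact redH0_iso k (↥S) Δ φ hφ _ _ hu₀ hv₀ hrep
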